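/- arXiv:1202.5739 — 6 statements merged into one kernel-verified Lean document; each statement's English description precedes it below -/
import Mathlib

section
/- Let w ∈ F^10 be a nonzero vector. Then w lies in the span of {q1(u,v), q2(u,v), r(u,v)} for some (u,v) ∈ F² with (u,v) ≠ (0,0) if and only if w ∈ X ∪ Y. In other words, the union over all (u,v) ≠ (0,0) of the sets of nonzero vectors of the planes γ(u,v) = span{q1(u,v), q2(u,v), r(u,v)} equals X ∪ Y. -/
/-- Coordinates of `F^10` are indexed (in this order) by
`p135, p136, p145, p146, p235, p236, p245, p246, p356, p456`. -/
def q1 {F : Type*} [Field F] (u v : F) : Fin 10 → F :=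
  ![u ^ 2, u * v, u * v, v ^ 2, 0, 0, 0, 0, 0, 0]

def q2 {F : Type*} [Field F] (u v : F) : Fin 10 → F :=
  ![0, 0, 0, 0, u ^ 2, u * v, u * v, v ^ 2, 0, 0]

def r {F : Type*} [Field F] (u v : F) : Fin 10 → F :=
  ![0, 0, 0, 0, 0, 0, 0, 0, u, v]

/-- The parametrization of the Grassmann image of the `X`-submodules. -/
def Phi {F : Type*} [Field F] (a11 b11 a22 b22 a12 b12 : F) : Fin 10 → F :=
  ![-(a11 * a22 ^ 2), -(a11 * a22 * b22), -(a11 * a22 * b22), -(a11 * b22 ^ 2),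
    -(b11 * a22 ^ 2), -(b11 * a22 * b22), -(b11 * a22 * b22), -(b11 * b22 ^ 2),
    a22 * (a12 * b22 - b12 * a22), b22 * (a12 * b22 - b12 * a22)]

/-- The Grassmann image `X` of the set of `X`-submodules. -/
def Xset (F : Type*) [Field F] : Set (Fin 10 → F) :=
  {p | ∃ a11 b11 a22 b22 a12 b12 : F,
    (a11, b11) ≠ (0, 0) ∧ (a22, b22) ≠ (0, 0) ∧ p = Phi a11 b11 a22 b22 a12 b12}

/-- The Grassmann image `Y` of the set of `Y`-submodules: all coordinates vanish
except `(p356, p456) ≠ (0,0)`. -/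
def Yset (F : Type*) [Field F] : Set (Fin 10 → F) :=
  {p | p 0 = 0 ∧ p 1 = 0 ∧ p 2 = 0 ∧ p 3 = 0 ∧ p 4 = 0 ∧ p 5 = 0 ∧ p 6 = 0 ∧
    p 7 = 0 ∧ (p 8, p 9) ≠ (0, 0)}

private lemma comb {F : Type*} [Field F] (a b c u v : F) :
    a • q1 u v + (b • q2 u v + c • r u v) =
    ![a * u ^ 2, a * (u * v), a * (u * v), a * v ^ 2,
      b * u ^ 2, b * (u * v), b * (u * v), b * v ^ 2, c * u, c * v] := by
  simp [q1, q2, r, Matrix.smul_cons, Matrix.smul_empty, Matrix.add_cons,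
    Matrix.head_cons, Matrix.tail_cons, Matrix.empty_add_empty, smul_eq_mul]

private lemma mem_span3 {F : Type*} [Field F] {x y z w : Fin 10 → F} (a b c : F)
    (h : w = a • x + (b • y + c • z)) :
    w ∈ Submodule.span F ({x, y, z} : Set (Fin 10 → F)) := by
  rw [h]
  refine Submodule.add_mem _ ?_ (Submodule.add_mem _ ?_ ?_) <;>
    exact Submodule.smul_mem _ _ (Submodule.subset_span (by simp))

private lemma eta10 {F : Type*} [Field F] (w : Fin 10 → F) :
    w = ![w 0, w 1, w 2, w 3, w 4, w 5, w 6, w 7, w 8, w 9] :=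
  (FinVec.etaExpand_eq w).symm

/-- A nonzero vector `w` lies in some plane `γ(u,v) = span{q1(u,v), q2(u,v), r(u,v)}`
with `(u,v) ≠ (0,0)` if and only if `w ∈ X ∪ Y`. -/
theorem statement1 {F : Type*} [Field F] (w : Fin 10 → F) (hw : w ≠ 0) :
    (∃ u v : F, (u, v) ≠ (0, 0) ∧
      w ∈ Submodule.span F ({q1 u v, q2 u v, r u v} : Set (Fin 10 → F))) ↔
    w ∈ Xset F ∪ Yset F := by
  constructor
  · rintro ⟨u, v, huv, hmem⟩
    rw [Submodule.mem_span_insert] at hmem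
    obtain ⟨a, z, hz, rfl⟩ := hmem
    rw [Submodule.mem_span_insert] at hz
    obtain ⟨b, z2, hz2, rfl⟩ := hz
    rw [Submodule.mem_span_singleton] at hz2
    obtain ⟨c, rfl⟩ := hz2
    by_cases hab : a = 0 ∧ b = 0
    · right
      obtain ⟨rfl, rfl⟩ := hab
      have hc : c ≠ 0 := by
        rintro rfl; exact hw (by simp)
      have hne : (c * u, c * v) ≠ (0, 0) := by
        intro h
        apply huv
        have h1 : c * u = 0 := congrArg Prod.fst h
        have h2 : c * v = 0 := congrArg Prod.snd h
        have hu : u = 0 := by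
          rcases mul_eq_zero.1 h1 with h | h; exact absurd h hc; exact h
        have hv : v = 0 := by
          rcases mul_eq_zero.1 h2 with h | h; exact absurd h hc; exact h
        simp [hu, hv]
      rw [comb]
      simp only [zero_mul]
      exact ⟨rfl, rfl, rfl, rfl, rfl, rfl, rfl, rfl, hne⟩
    · left
      have hab' : ((-a : F), (-b : F)) ≠ (0, 0) := by
        intro h
        apply hab
        have h1 : -a = 0 := congrArg Prod.fst h
        have h2 : -b = 0 := congrArg Prod.snd h
        exact ⟨by linear_combination -h1, by linear_combination -h2⟩
      rw [comb]
      by_cases hv : v ≠ 0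
      · refine ⟨-a, -b, u, v, c / v, 0, hab', huv, ?_⟩
        simp only [Phi, Matrix.vecCons, Fin.cons_inj]
        refine ⟨by ring, by ring, by ring, by ring, by ring, by ring, by ring,
          by ring, by field_simp; ring, by field_simp; ring, trivial⟩
      · push_neg at hv
        have hu : u ≠ 0 := by
          intro h; exact huv (by simp [h, hv])
        subst hv
        refine ⟨-a, -b, u, 0, 0, -(c / u), hab', huv, ?_⟩
        simp only [Phi, Matrix.vecCons, Fin.cons_inj]
        refine ⟨by ring, by ring, by ring, by ring, by ring, by ring, by ring,
          by ring, by field_simp; ring, by ring, trivial⟩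
  · rintro (⟨a11, b11, a22, b22, a12, b12, h1, h2, rfl⟩ | ⟨h0, h1, h2, h3, h4, h5, h6, h7, h89⟩)
    · refine ⟨a22, b22, h2, mem_span3 (-a11) (-b11) (a12 * b22 - b12 * a22) ?_⟩
      rw [comb]
      simp only [Phi, Matrix.vecCons, Fin.cons_inj]
      refine ⟨by ring, by ring, by ring, by ring, by ring, by ring, by ring,
        by ring, by ring, by ring, trivial⟩
    · refine ⟨w 8, w 9, h89, mem_span3 0 0 1 ?_⟩
      rw [comb, eta10 w]
      simp only [zero_mul, one_mul, Matrix.vecCons, Fin.cons_inj]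
      exact ⟨h0, h1, h2, h3, h4, h5, h6, h7, rfl, rfl, trivial⟩
end

section
/- A nonzero vector p ∈ F^10 satisfies p136 = p145, p236 = p245 and the nine quadratic equations p135·p146 − p145² = 0, p235·p246 − p245² = 0, p146·p245 − p145·p246 = 0, p135·p246 − p235·p146 = 0, p135·p245 − p145·p235 = 0, p135·p456 − p145·p356 = 0, p145·p456 − p146·p356 = 0, p235·p456 − p245·p356 = 0, p245·p456 − p246·p356 = 0 if and only if p ∈ X ∪ Y. (That is, X ∪ Y is exactly the algebraic set cut out by these equations.) -/
lemma eq_Phi_of {F : Type*} [Field F] (p : Fin 10 → F) (a11 b11 a22 b22 a12 b12 : F)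
    (h0 : p 0 = -(a11 * a22 ^ 2)) (h1 : p 1 = -(a11 * a22 * b22))
    (h2 : p 2 = -(a11 * a22 * b22)) (h3 : p 3 = -(a11 * b22 ^ 2))
    (h4 : p 4 = -(b11 * a22 ^ 2)) (h5 : p 5 = -(b11 * a22 * b22))
    (h6 : p 6 = -(b11 * a22 * b22)) (h7 : p 7 = -(b11 * b22 ^ 2))
    (h8 : p 8 = a22 * (a12 * b22 - b12 * a22))
    (h9 : p 9 = b22 * (a12 * b22 - b12 * a22)) :
    p = Phi a11 b11 a22 b22 a12 b12 := by
  funext i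
  fin_cases i <;> assumption

/-- A nonzero vector of `F^10` satisfies the linear identities `p136 = p145`,
`p236 = p245` and the nine quadratic equations if and only if it belongs to
`X ∪ Y`. -/
theorem statement3 {F : Type*} [Field F] (p : Fin 10 → F) (hp : p ≠ 0) :
    (p 1 = p 2 ∧ p 5 = p 6 ∧
     p 0 * p 3 - p 2 ^ 2 = 0 ∧
     p 4 * p 7 - p 6 ^ 2 = 0 ∧
     p 3 * p 6 - p 2 * p 7 = 0 ∧
     p 0 * p 7 - p 4 * p 3 = 0 ∧
     p 0 * p 6 - p 2 * p 4 = 0 ∧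
     p 0 * p 9 - p 2 * p 8 = 0 ∧
     p 2 * p 9 - p 3 * p 8 = 0 ∧
     p 4 * p 9 - p 6 * p 8 = 0 ∧
     p 6 * p 9 - p 7 * p 8 = 0) ↔
    p ∈ Xset F ∪ Yset F := by
  constructor
  · rintro ⟨h1, h5, e1, e2, e3, e4, e5, e6, e7, e8, e9⟩
    by_cases h0 : p 0 = 0
    · have h2 : p 2 = 0 := by
        have hsq : p 2 ^ 2 = 0 := by linear_combination -e1 + p 3 * h0
        exact pow_eq_zero_iff two_ne_zero |>.mp hsq
      by_cases h4 : p 4 = 0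
      · have h6 : p 6 = 0 := by
          have hsq : p 6 ^ 2 = 0 := by linear_combination -e2 + p 7 * h4
          exact pow_eq_zero_iff two_ne_zero |>.mp hsq
        by_cases h37 : p 3 = 0 ∧ p 7 = 0
        · -- Yset case
          right
          refine ⟨h0, h1.trans h2, h2, h37.1, h4, h5.trans h6, h6, h37.2, ?_⟩
          intro hc
          apply hp
          have hc8 : p 8 = 0 := (Prod.mk.injEq _ _ _ _ ▸ hc).1
          have hc9 : p 9 = 0 := (Prod.mk.injEq _ _ _ _ ▸ hc).2
          funext i
          fin_cases i <;> simp_all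
        · -- Case B : a22 = 0, b22 = 1
          left
          have h37' : ¬ (p 3 = 0) ∨ ¬ (p 7 = 0) := by tauto
          have h8 : p 8 = 0 := by
            rcases h37' with h3 | h7
            · have : p 3 * p 8 = 0 := by linear_combination -e7 + p 9 * h2
              exact (mul_eq_zero.mp this).resolve_left h3
            · have : p 7 * p 8 = 0 := by linear_combination -e9 + p 9 * h6
              exact (mul_eq_zero.mp this).resolve_left h7
          refine ⟨-(p 3), -(p 7), 0, 1, p 9, 0, ?_, ?_, ?_⟩
          · simp only [ne_eq, Prod.mk.injEq, neg_eq_zero, not_and]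
            tauto
          · simp
          · apply eq_Phi_of
            · linear_combination h0
            · linear_combination h1 + h2
            · linear_combination h2
            · ring
            · linear_combination h4
            · linear_combination h5 + h6
            · linear_combination h6
            · ring
            · linear_combination h8
            · ring
      · -- Case A' : p 4 ≠ 0
        left
        have h3 : p 3 = 0 := by
          have : p 4 * p 3 = 0 := by linear_combination -e4 + p 7 * h0
          exact (mul_eq_zero.mp this).resolve_left h4
        refine ⟨0, -(p 4), 1, p 6 / p 4, 0, -(p 8), ?_, ?_, ?_⟩
        · simp [h4]
        · simp
        · apply eq_Phi_of
          · linear_combination h0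
          · linear_combination h1 + h2
          · linear_combination h2
          · linear_combination h3
          · ring_nf
          · field_simp
            exact h5
          · field_simp
          · field_simp
            linear_combination e2
          · ring
          · field_simp
            linear_combination p 4 * e8
    · -- Case A : p 0 ≠ 0
      left
      refine ⟨-(p 0), -(p 4), 1, p 2 / p 0, 0, -(p 8), ?_, ?_, ?_⟩
      · simp [h0]
      · simp
      · apply eq_Phi_of
        · ring_nf
        · field_simp
          exact h1
        · field_simp
        · field_simp
          linear_combination e1
        · ring_nf
        · field_simp
          linear_combination p 0 * h5 + e5
        · field_simp
          linear_combination e5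
        · field_simp
          linear_combination p 4 * e1 + p 0 * e4
        · ring
        · field_simp
          linear_combination p 0 * e6
  · rintro (⟨a11, b11, a22, b22, a12, b12, hab1, hab2, rfl⟩ | ⟨q0, q1, q2, q3, q4, q5, q6, q7, q89⟩)
    · have P0 : Phi a11 b11 a22 b22 a12 b12 0 = -(a11 * a22 ^ 2) := rfl
      have P1 : Phi a11 b11 a22 b22 a12 b12 1 = -(a11 * a22 * b22) := rfl
      have P2 : Phi a11 b11 a22 b22 a12 b12 2 = -(a11 * a22 * b22) := rfl
      have P3 : Phi a11 b11 a22 b22 a12 b12 3 = -(a11 * b22 ^ 2) := rfl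
      have P4 : Phi a11 b11 a22 b22 a12 b12 4 = -(b11 * a22 ^ 2) := rfl
      have P5 : Phi a11 b11 a22 b22 a12 b12 5 = -(b11 * a22 * b22) := rfl
      have P6 : Phi a11 b11 a22 b22 a12 b12 6 = -(b11 * a22 * b22) := rfl
      have P7 : Phi a11 b11 a22 b22 a12 b12 7 = -(b11 * b22 ^ 2) := rfl
      have P8 : Phi a11 b11 a22 b22 a12 b12 8 = a22 * (a12 * b22 - b12 * a22) := rfl
      have P9 : Phi a11 b11 a22 b22 a12 b12 9 = b22 * (a12 * b22 - b12 * a22) := rfl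
      refine ⟨?_, ?_, ?_, ?_, ?_, ?_, ?_, ?_, ?_, ?_, ?_⟩ <;>
        simp only [P0, P1, P2, P3, P4, P5, P6, P7, P8, P9] <;> ring
    · refine ⟨?_, ?_, ?_, ?_, ?_, ?_, ?_, ?_, ?_, ?_, ?_⟩ <;>
        simp [q0, q1, q2, q3, q4, q5, q6, q7]
end

section
/- For every (a11,b11,a22,b22,a12,b12) ∈ F^6 with (a11,b11) ≠ (0,0) and (a22,b22) ≠ (0,0), the 10×6 Jacobian matrix of Φ at this point — the matrix whose rows are the formal partial derivatives of the ten coordinate polynomials of Φ with respect to the six parameters a11, b11, a22, b22, a12, b12 (for instance, the row corresponding to p135 = −a11·a22² is (−a22², 0, −2·a11·a22, 0, 0, 0)), evaluated at the given point — has rank exactly 4, regardless of the characteristic of F. -/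
set_option maxHeartbeats 1600000

open MvPolynomial

section VecLemmas
variable {α : Type*}

@[simp] lemma v6_5 (a b c d e f : α) : ![a,b,c,d,e,f] (5 : Fin 6) = f := rfl
@[simp] lemma v10_5 (a b c d e f g h i j : α) : ![a,b,c,d,e,f,g,h,i,j] (5 : Fin 10) = f := rfl
@[simp] lemma v10_6 (a b c d e f g h i j : α) : ![a,b,c,d,e,f,g,h,i,j] (6 : Fin 10) = g := rfl
@[simp] lemma v10_7 (a b c d e f g h i j : α) : ![a,b,c,d,e,f,g,h,i,j] (7 : Fin 10) = h := rfl
@[simp] lemma v10_8 (a b c d e f g h i j : α) : ![a,b,c,d,e,f,g,h,i,j] (8 : Fin 10) = i := rfl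
@[simp] lemma v10_9 (a b c d e f g h i j : α) : ![a,b,c,d,e,f,g,h,i,j] (9 : Fin 10) = j := rfl

end VecLemmas

/-- Full expansion of a `4 × 4` determinant. -/
theorem det_fin_four' {R : Type*} [CommRing R] (A : Matrix (Fin 4) (Fin 4) R) :
    A.det = A 0 0 * A 1 1 * A 2 2 * A 3 3 - A 0 0 * A 1 1 * A 2 3 * A 3 2 - A 0 0 * A 1 2 * A 2 1 * A 3 3 + A 0 0 * A 1 2 * A 2 3 * A 3 1 + A 0 0 * A 1 3 * A 2 1 * A 3 2 - A 0 0 * A 1 3 * A 2 2 * A 3 1 - A 0 1 * A 1 0 * A 2 2 * A 3 3 + A 0 1 * A 1 0 * A 2 3 * A 3 2 + A 0 1 * A 1 2 * A 2 0 * A 3 3 - A 0 1 * A 1 2 * A 2 3 * A 3 0 - A 0 1 * A 1 3 * A 2 0 * A 3 2 + A 0 1 * A 1 3 * A 2 2 * A 3 0 + A 0 2 * A 1 0 * A 2 1 * A 3 3 - A 0 2 * A 1 0 * A 2 3 * A 3 1 - A 0 2 * A 1 1 * A 2 0 * A 3 3 + A 0 2 * A 1 1 * A 2 3 * A 3 0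 + A 0 2 * A 1 3 * A 2 0 * A 3 1 - A 0 2 * A 1 3 * A 2 1 * A 3 0 - A 0 3 * A 1 0 * A 2 1 * A 3 2 + A 0 3 * A 1 0 * A 2 2 * A 3 1 + A 0 3 * A 1 1 * A 2 0 * A 3 2 - A 0 3 * A 1 1 * A 2 2 * A 3 0 - A 0 3 * A 1 2 * A 2 0 * A 3 1 + A 0 3 * A 1 2 * A 2 1 * A 3 0 := by
  simp only [Matrix.det_succ_row_zero, Fin.sum_univ_succ, Matrix.det_fin_three,
    Matrix.submatrix_apply, Finset.univ_unique, Fin.default_eq_zero, Finset.sum_singleton,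
    Fin.val_zero, Fin.val_succ, Fin.zero_succAbove, Fin.succ_zero_eq_one, Fin.succ_one_eq_two,
    Fin.succ_succAbove_zero, Fin.succ_succAbove_one, Matrix.det_fin_zero, Fin.sum_univ_zero]
  norm_num [Fin.succAbove, Fin.lt_def, Fin.ext_iff]
  simp only [show (Fin.succ 2 : Fin 4) = 3 from rfl, show (Fin.castSucc 2 : Fin 4) = 2 from rfl]
  ring

/-- A matrix dominates any of its (generalized) submatrices in rank. -/
lemma rank_submatrix_le' {F : Type*} [Field F] (A : Matrix (Fin 10) (Fin 6) F)
    (r : Fin 4 → Fin 10) (c : Fin 4 → Fin 6) :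
    (A.submatrix r c).rank ≤ A.rank := by
  have h : A.submatrix r c =
      ((1 : Matrix (Fin 10) (Fin 10) F).submatrix r (Equiv.refl (Fin 10))) * A *
        ((1 : Matrix (Fin 6) (Fin 6) F).submatrix (Equiv.refl (Fin 6)) c) := by
    rw [Matrix.one_submatrix_mul, Matrix.mul_submatrix_one]
    simp [Matrix.submatrix_submatrix, Function.comp_def]
  rw [h]
  exact le_trans (Matrix.rank_mul_le_left _ _) (Matrix.rank_mul_le_right _ _)

/-- If some `4 × 4` submatrix has nonzero determinant, the rank is at least `4`. -/
lemma four_le_rank {F : Type*} [Field F] (A : Matrix (Fin 10) (Fin 6) F)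
    (r : Fin 4 → Fin 10) (c : Fin 4 → Fin 6) (h : (A.submatrix r c).det ≠ 0) :
    4 ≤ A.rank := by
  have h4 : (A.submatrix r c).rank = 4 := by
    rw [Matrix.rank_of_isUnit _ ((Matrix.isUnit_iff_isUnit_det _).mpr (isUnit_iff_ne_zero.mpr h))]
    simp
  calc (4 : ℕ) = (A.submatrix r c).rank := h4.symm
    _ ≤ A.rank := rank_submatrix_le' A r c

/-- The ten coordinate polynomials (indexed in the order
`p135, p136, p145, p146, p235, p236, p245, p246, p356, p456`) of the polynomial
map `Φ : F^6 → F^10`, as polynomials in the six variables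
`a11, b11, a22, b22, a12, b12` (variables `0,…,5` in this order). -/
noncomputable def PhiPoly (F : Type*) [Field F] : Fin 10 → MvPolynomial (Fin 6) F :=
  ![-(X 0 * X 2 ^ 2), -(X 0 * X 2 * X 3), -(X 0 * X 2 * X 3), -(X 0 * X 3 ^ 2),
    -(X 1 * X 2 ^ 2), -(X 1 * X 2 * X 3), -(X 1 * X 2 * X 3), -(X 1 * X 3 ^ 2),
    X 2 * (X 4 * X 3 - X 5 * X 2), X 3 * (X 4 * X 3 - X 5 * X 2)]

/-- The `10 × 6` Jacobian matrix of `Φ` at a point of `F^6`: its rows are the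
formal partial derivatives of the ten coordinate polynomials with respect to the
six parameters `a11, b11, a22, b22, a12, b12`, evaluated at the point. -/
noncomputable def PhiJacobian {F : Type*} [Field F] (a11 b11 a22 b22 a12 b12 : F) :
    Matrix (Fin 10) (Fin 6) F :=
  Matrix.of fun i j =>
    MvPolynomial.eval ![a11, b11, a22, b22, a12, b12] (MvPolynomial.pderiv j (PhiPoly F i))

/-- At every parameter point with `(a11,b11) ≠ (0,0)` and `(a22,b22) ≠ (0,0)`
the Jacobian matrix of `Φ` has rank exactly `4`, regardless of the
characteristic of `F`. -/
theorem statement4 {F : Type*} [Field F] (a11 b11 a22 b22 a12 b12 : F)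
    (h1 : (a11, b11) ≠ (0, 0)) (h2 : (a22, b22) ≠ (0, 0)) :
    (PhiJacobian a11 b11 a22 b22 a12 b12).rank = 4 := by
  classical
  set A := PhiJacobian a11 b11 a22 b22 a12 b12 with hA
  have h1' : ¬ (a11 = 0 ∧ b11 = 0) := by
    intro h; exact h1 (by simp [h.1, h.2])
  have h2' : ¬ (a22 = 0 ∧ b22 = 0) := by
    intro h; exact h2 (by simp [h.1, h.2])
  -- the two kernel vectors
  set v1 : Fin 6 → F := ![0, 0, 0, 0, a22, b22] with hv1def
  set v2 : Fin 6 → F := ![2*a11, 2*b11, -a22, -b22, 2*a12, 2*b12] with hv2def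
  have hv1 : A.mulVec v1 = 0 := by
    ext i
    fin_cases i <;>
      (simp [hA, hv1def, PhiJacobian, PhiPoly, Matrix.mulVec, dotProduct,
        Fin.sum_univ_six, pderiv_mul, pderiv_X]; try ring)
  have hv2 : A.mulVec v2 = 0 := by
    ext i
    fin_cases i <;>
      (simp [hA, hv2def, PhiJacobian, PhiPoly, Matrix.mulVec, dotProduct,
        Fin.sum_univ_six, pderiv_mul, pderiv_X]; try ring)
  -- upper bound : rank ≤ 4
  have hle : A.rank ≤ 4 := by
    have hrn : A.rank + Module.finrank F (LinearMap.ker A.mulVecLin) = 6 := by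
      have := LinearMap.finrank_range_add_finrank_ker A.mulVecLin
      rw [Matrix.rank]
      simpa using this
    have hind : LinearIndependent F ![v1, v2] := by
      rw [LinearIndependent.pair_iff]
      intro s t hst
      have hc := fun k => congr_fun hst k
      have e2 := hc 2; have e3 := hc 3; have e4 := hc 4; have e5 := hc 5
      simp [hv1def, hv2def] at e2 e3 e4 e5
      have ht : t = 0 := by
        by_contra ht
        exact h2' ⟨e2.resolve_left ht, e3.resolve_left ht⟩
      subst ht
      simp at e4 e5
      have hs : s = 0 := by
        by_contra hs
        exact h2' ⟨e4.resolve_left hs, e5.resolve_left hs⟩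
      exact ⟨hs, rfl⟩
    have hspan : Submodule.span F (Set.range ![v1, v2]) ≤ LinearMap.ker A.mulVecLin := by
      rw [Submodule.span_le]
      rintro x ⟨i, rfl⟩
      fin_cases i <;> simp [LinearMap.mem_ker, Matrix.mulVecLin_apply, hv1, hv2]
    have hdim : 2 ≤ Module.finrank F (LinearMap.ker A.mulVecLin) := by
      have := Submodule.finrank_mono hspan
      rwa [finrank_span_eq_card hind, Fintype.card_fin] at this
    omega
  -- lower bound : rank ≥ 4
  have ha : a11 ≠ 0 ∨ b11 ≠ 0 := by
    by_contra h; push_neg at h; exact h1' ⟨h.1, h.2⟩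
  have hb : a22 ≠ 0 ∨ b22 ≠ 0 := by
    by_contra h; push_neg at h; exact h2' ⟨h.1, h.2⟩
  have hge : 4 ≤ A.rank := by
    rcases ha with ha | ha <;> rcases hb with hb | hb
    · -- a11 ≠ 0, a22 ≠ 0 : det = -(a11 * a22^7)
      apply four_le_rank A ![0, 1, 4, 8] ![0, 1, 3, 5]
      have hdet : (A.submatrix ![0, 1, 4, 8] ![0, 1, 3, 5]).det = -(a11 * a22^7) := by
        rw [det_fin_four']
        simp [hA, PhiJacobian, PhiPoly, pderiv_mul, pderiv_X]
        ring
      rw [hdet]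
      simpa using fun h => (mul_eq_zero.mp h).elim ha (pow_ne_zero 7 hb)
    · -- a11 ≠ 0, b22 ≠ 0 : det = a11 * b22^7
      apply four_le_rank A ![3, 2, 7, 9] ![0, 1, 2, 4]
      have hdet : (A.submatrix ![3, 2, 7, 9] ![0, 1, 2, 4]).det = a11 * b22^7 := by
        rw [det_fin_four']
        simp [hA, PhiJacobian, PhiPoly, pderiv_mul, pderiv_X]
        ring
      rw [hdet]
      exact fun h => (mul_eq_zero.mp h).elim ha (pow_ne_zero 7 hb)
    · -- b11 ≠ 0, a22 ≠ 0 : det = b11 * a22^7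
      apply four_le_rank A ![0, 4, 5, 8] ![0, 1, 3, 5]
      have hdet : (A.submatrix ![0, 4, 5, 8] ![0, 1, 3, 5]).det = b11 * a22^7 := by
        rw [det_fin_four']
        simp [hA, PhiJacobian, PhiPoly, pderiv_mul, pderiv_X]
        ring
      rw [hdet]
      exact fun h => (mul_eq_zero.mp h).elim ha (pow_ne_zero 7 hb)
    · -- b11 ≠ 0, b22 ≠ 0 : det = -(b11 * b22^7)
      apply four_le_rank A ![3, 7, 6, 9] ![0, 1, 2, 4]
      have hdet : (A.submatrix ![3, 7, 6, 9] ![0, 1, 2, 4]).det = -(b11 * b22^7) := by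
        rw [det_fin_four']
        simp [hA, PhiJacobian, PhiPoly, pderiv_mul, pderiv_X]
        ring
      rw [hdet]
      simpa using fun h => (mul_eq_zero.mp h).elim ha (pow_ne_zero 7 hb)
  omega
end

section
/- Let g1 = [[0,0],[0,1]] and g2 = [[0,1],[0,0]] (2×2 matrices over F, both elements of T). Then the left T-submodule of T² generated by the pair (g1, g2), i.e., the set {(t·g1, t·g2) : t ∈ T}, equals the set of all pairs ([[0,y],[0,z]], [[0,x],[0,0]]) with x, y, z ∈ F. -/
/-- The ring of ternions over `F`: the subring of `2 × 2` matrices over `F`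
consisting of the upper triangular matrices (those with vanishing
`(2,1)`-entry). -/
def Ternions (F : Type*) [Field F] : Subring (Matrix (Fin 2) (Fin 2) F) where
  carrier := {M | M 1 0 = 0}
  zero_mem' := by simp
  one_mem' := by simp [Matrix.one_apply]
  add_mem' := by
    intro a b ha hb
    simp only [Set.mem_setOf_eq] at *
    simp [Matrix.add_apply, ha, hb]
  neg_mem' := by
    intro a ha
    simp only [Set.mem_setOf_eq] at *
    simp [Matrix.neg_apply, ha]
  mul_mem' := by
    intro a b ha hb
    simp only [Set.mem_setOf_eq] at *
    simp [Matrix.mul_apply, Fin.sum_univ_two, ha, hb]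

/-- The cyclic left `T`-submodule of `T²` generated by the pair
`(g1, g2) = ([[0,0],[0,1]], [[0,1],[0,0]])`, i.e. the set `{(t·g1, t·g2) : t ∈ T}`,
is exactly the set of all pairs `([[0,y],[0,z]], [[0,x],[0,0]])` with
`x, y, z ∈ F`. -/
theorem statement12 {F : Type*} [Field F] :
    {p : Matrix (Fin 2) (Fin 2) F × Matrix (Fin 2) (Fin 2) F |
      ∃ t : Ternions F,
        p = ((t : Matrix (Fin 2) (Fin 2) F) * !![0, 0; 0, 1],
             (t : Matrix (Fin 2) (Fin 2) F) * !![0, 1; 0, 0])} =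
    {p | ∃ x y z : F, p = (!![0, y; 0, z], !![0, x; 0, 0])} := by
  ext p
  simp only [Set.mem_setOf_eq]
  constructor
  · rintro ⟨⟨t, ht⟩, rfl⟩
    refine ⟨t 0 0, t 0 1, t 1 1, ?_⟩
    have h10 : t 1 0 = 0 := ht
    simp only [Prod.mk.injEq]
    constructor <;> (ext i j; fin_cases i <;> fin_cases j <;>
      simp [Matrix.mul_apply, Fin.sum_univ_two, h10])
  · rintro ⟨x, y, z, rfl⟩
    refine ⟨⟨!![x, y; 0, z], show !![x, y; 0, z] 1 0 = 0 by simp⟩, ?_⟩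
    ext i j <;> fin_cases i <;> fin_cases j <;>
      simp [Matrix.mul_apply, Fin.sum_univ_two]
end

section
/- Let g1 = [[0,0],[0,1]] and g2 = [[0,1],[0,0]] (2×2 matrices over F, both elements of T). If t ∈ T satisfies t·g1 = 0 and t·g2 = 0, then t = 0. Hence the cyclic left T-submodule of T² generated by (g1,g2) is free of rank 1. -/
/-- If a ternion `t` annihilates both components of the pair
`(g1, g2) = ([[0,0],[0,1]], [[0,1],[0,0]])`, then `t = 0`; hence the cyclic left
`T`-submodule of `T²` generated by `(g1, g2)` is free of rank `1`. -/
theorem statement13 {F : Type*} [Field F] (t : Ternions F)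
    (h1 : (t : Matrix (Fin 2) (Fin 2) F) * !![0, 0; 0, 1] = 0)
    (h2 : (t : Matrix (Fin 2) (Fin 2) F) * !![0, 1; 0, 0] = 0) :
    t = 0 := by
  have ht := t.2
  ext i j
  have e1 := congrFun (congrFun h1 i) 1
  have e2 := congrFun (congrFun h2 i) 1
  simp [Matrix.mul_apply, Fin.sum_univ_two] at e1 e2 ht
  fin_cases i <;> fin_cases j <;> simp_all [Matrix.zero_apply]
end

section
/- For (u,v), (u',v') ∈ F² ∖ {(0,0)}, the planes γ(u,v) = span{q1(u,v), q2(u,v), r(u,v)} and γ(u',v') = span{q1(u',v'), q2(u',v'), r(u',v')} in F^10 are equal if and only if (u',v') = λ·(u,v) for some λ ∈ F ∖ {0}. Hence the assignment of the plane γ(u,v) to the parameter point (u : v) of the projective line over F is well defined and injective. -/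
lemma q1_smul {F : Type*} [Field F] (lam u v : F) :
    q1 (lam * u) (lam * v) = (lam ^ 2) • q1 u v := by
  funext i
  fin_cases i <;> norm_num [q1] <;> ring

lemma q2_smul {F : Type*} [Field F] (lam u v : F) :
    q2 (lam * u) (lam * v) = (lam ^ 2) • q2 u v := by
  funext i
  fin_cases i <;> norm_num [q2] <;> ring

lemma r_smul {F : Type*} [Field F] (lam u v : F) :
    r (lam * u) (lam * v) = lam • r u v := by
  funext i
  fin_cases i <;> norm_num [r]

/-- Two planes `γ(u,v)` and `γ(u',v')` coincide if and only if the parameter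
pairs are proportional; hence `(u : v) ↦ γ(u,v)` is a well-defined injective map
on the projective line over `F`. -/
theorem statement15 {F : Type*} [Field F] (u v u' v' : F)
    (h : (u, v) ≠ (0, 0)) (h' : (u', v') ≠ (0, 0)) :
    Submodule.span F ({q1 u v, q2 u v, r u v} : Set (Fin 10 → F)) =
      Submodule.span F ({q1 u' v', q2 u' v', r u' v'} : Set (Fin 10 → F)) ↔
    ∃ lam : F, lam ≠ 0 ∧ (u', v') = (lam * u, lam * v) := by
  constructor
  · intro hspan
    have hmem : r u' v' ∈ Submodule.span F ({q1 u v, q2 u v, r u v} : Set (Fin 10 → F)) := by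
      rw [hspan]
      exact Submodule.subset_span (by simp)
    rw [Submodule.mem_span_insert] at hmem
    obtain ⟨a, z, hz, heq⟩ := hmem
    rw [Submodule.mem_span_insert] at hz
    obtain ⟨b, w, hw, heqz⟩ := hz
    rw [Submodule.mem_span_singleton] at hw
    obtain ⟨c, hc⟩ := hw
    subst heqz
    subst hc
    -- extract coordinates 8 and 9
    have h8 : u' = a * 0 + (b * 0 + c * u) := congrFun heq 8
    have h9 : v' = a * 0 + (b * 0 + c * v) := congrFun heq 9
    have h8' : u' = c * u := by linear_combination h8
    have h9' : v' = c * v := by linear_combination h9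
    refine ⟨c, ?_, ?_⟩
    · rintro rfl
      simp at h8' h9'
      exact h' (by simp [h8', h9'])
    · simp [Prod.ext_iff, h8', h9']
  · rintro ⟨lam, hlam, heq⟩
    have hu' : u' = lam * u := by simpa using congrArg Prod.fst heq
    have hv' : v' = lam * v := by simpa using congrArg Prod.snd heq
    subst hu'; subst hv'
    apply le_antisymm <;> rw [Submodule.span_le] <;> intro x hx <;>
      simp only [Set.mem_insert_iff, Set.mem_singleton_iff] at hx
    · rcases hx with rfl | rfl | rfl
      · have : q1 u v = (lam ^ 2)⁻¹ • q1 (lam * u) (lam * v) := by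
          rw [q1_smul, smul_smul, inv_mul_cancel₀ (pow_ne_zero 2 hlam), one_smul]
        rw [this]
        exact Submodule.smul_mem _ _ (Submodule.subset_span (by simp))
      · have : q2 u v = (lam ^ 2)⁻¹ • q2 (lam * u) (lam * v) := by
          rw [q2_smul, smul_smul, inv_mul_cancel₀ (pow_ne_zero 2 hlam), one_smul]
        rw [this]
        exact Submodule.smul_mem _ _ (Submodule.subset_span (by simp))
      · have : r u v = lam⁻¹ • r (lam * u) (lam * v) := by
          rw [r_smul, smul_smul, inv_mul_cancel₀ hlam, one_smul]
        rw [this]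
        exact Submodule.smul_mem _ _ (Submodule.subset_span (by simp))
    · rcases hx with rfl | rfl | rfl
      · rw [q1_smul]
        exact Submodule.smul_mem _ _ (Submodule.subset_span (by simp))
      · rw [q2_smul]
        exact Submodule.smul_mem _ _ (Submodule.subset_span (by simp))
      · rw [r_smul]
        exact Submodule.smul_mem _ _ (Submodule.subset_span (by simp))
end
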